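/- Let m ≥ 1, let P be a real m×m matrix with Pᵀ = P, P·P = P and trace P = n where n ≤ m, and let X be a finite set of vectors in ℝ^m. Let I_P = Σ_{x ∈ X} (P·x)(P·x)ᵀ be the sum of the outer products of the projected vectors with themselves. Then X^{m−n} divides the characteristic polynomial of I_P; that is, the characteristic polynomial of I_P has at least m − n zero roots. -/

import Mathlib

open Matrix Polynomial

/-- Characteristic polynomial is invariant under conjugation. -/
lemma my_charpoly_conj {m : ℕ} (U V D : Matrix (Fin m) (Fin m) ℝ)
    (hUV : U * V = 1) (hVU : V * U = 1) :
    (U * D * V).charpoly = D.charpoly := by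
  have hc : Commute (Matrix.scalar (Fin m) (X : ℝ[X]))
      ((C : ℝ →+* ℝ[X]).mapMatrix V) :=
    Matrix.scalar_commute _ (fun r => Commute.all _ _) _
  have key : charmatrix (U * D * V) =
      (C : ℝ →+* ℝ[X]).mapMatrix U * charmatrix D * (C : ℝ →+* ℝ[X]).mapMatrix V := by
    rw [charmatrix, charmatrix, mul_sub, sub_mul, RingHom.map_mul, RingHom.map_mul]
    congr 1
    rw [mul_assoc, hc.eq, ← mul_assoc, ← RingHom.map_mul, hUV, RingHom.map_one, one_mul]
  have h1 : ((C : ℝ →+* ℝ[X]).mapMatrix U).det * ((C : ℝ →+* ℝ[X]).mapMatrix V).det = 1 := by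
    rw [← det_mul, ← RingHom.map_mul, hUV, RingHom.map_one, det_one]
  rw [Matrix.charpoly, Matrix.charpoly, key, det_mul, det_mul,
    mul_comm ((C : ℝ →+* ℝ[X]).mapMatrix U).det, mul_assoc, h1, mul_one]

/-- If `P` is a symmetric idempotent `m×m` matrix of trace `n ≤ m` and `X` a finite set of
vectors, then the characteristic polynomial of the inertia matrix
`I_P = Σ_{x ∈ X} (P·x)(P·x)ᵀ` is divisible by `X^{m-n}`, i.e. it has at least `m − n`
zero roots. -/
theorem charpoly_inertia_dvd (m n : ℕ) (hm : 1 ≤ m) (hn : n ≤ m)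
    (P : Matrix (Fin m) (Fin m) ℝ) (hsym : Pᵀ = P) (hidem : P * P = P)
    (htr : P.trace = (n : ℝ)) (X : Finset (Fin m → ℝ)) :
    (Polynomial.X : Polynomial ℝ) ^ (m - n) ∣
      (∑ x ∈ X, Matrix.vecMulVec (P.mulVec x) (P.mulVec x)).charpoly := by
  classical
  set A := ∑ x ∈ X, Matrix.vecMulVec (P.mulVec x) (P.mulVec x) with hAdef
  have hs : ∀ a b, P a b = P b a := fun a b => by
    conv_lhs => rw [← hsym]
    rfl
  -- A is Hermitian
  have hAh : A.IsHermitian := by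
    unfold Matrix.IsHermitian
    ext i j
    simp only [conjTranspose_apply, hAdef, Matrix.sum_apply, star_trivial, vecMulVec_apply]
    exact Finset.sum_congr rfl fun x _ => mul_comm _ _
  have hPh : P.IsHermitian := by
    unfold Matrix.IsHermitian
    ext i j
    simp only [conjTranspose_apply, star_trivial]
    exact hs j i
  -- eigenvalues of P are 0 or 1
  have heig01 : ∀ i, hPh.eigenvalues i = 0 ∨ hPh.eigenvalues i = 1 := by
    intro i
    set μ := hPh.eigenvalues i with hμ
    have hv := hPh.mulVec_eigenvectorBasis i
    have hv2 : P *ᵥ (P *ᵥ ⇑(hPh.eigenvectorBasis i)) = P *ᵥ ⇑(hPh.eigenvectorBasis i) := by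
      rw [mulVec_mulVec, hidem]
    rw [hv, mulVec_smul, hv, smul_smul] at hv2
    have hvne : ⇑(hPh.eigenvectorBasis i) ≠ 0 := by
      have := hPh.eigenvectorBasis.orthonormal.ne_zero i
      intro h
      apply this
      ext j
      exact congrFun h j
    have hμμ : μ * μ = μ := by
      by_contra hne
      have : (μ * μ - μ) • ⇑(hPh.eigenvectorBasis i) = 0 := by
        rw [sub_smul, hv2, sub_self]
      rcases smul_eq_zero.mp this with h | h
      · exact hne (by linarith [sub_eq_zero.mp h])
      · exact hvne h
    rcases mul_eq_zero.mp (show μ * (μ - 1) = 0 by ring_nf; linarith) with h | h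
    · exact Or.inl h
    · exact Or.inr (by linarith [sub_eq_zero.mp h])
  -- trace P = sum of eigenvalues
  have htr' : ∑ i, hPh.eigenvalues i = (n : ℝ) := by
    rw [← htr]
    conv_rhs => rw [hPh.spectral_theorem, Unitary.conjStarAlgAut_apply]
    rw [trace_mul_comm, ← mul_assoc,
      (Matrix.mem_unitaryGroup_iff').mp (hPh.eigenvectorUnitary).2, one_mul, trace_diagonal]
    simp
  -- rank P = n
  have hrankP : P.rank = n := by
    have hcard : ((Finset.univ.filter fun i => hPh.eigenvalues i ≠ 0).card : ℝ) = (n : ℝ) := by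
      rw [← htr', ← Finset.sum_filter_ne_zero Finset.univ]
      rw [Finset.sum_congr rfl (fun i hi => ?_), Finset.sum_const, nsmul_eq_mul, mul_one]
      rcases heig01 i with h | h
      · exact absurd h (Finset.mem_filter.mp hi).2
      · exact h
    have : (Finset.univ.filter fun i => hPh.eigenvalues i ≠ 0).card = n :=
      Nat.cast_injective hcard
    rw [hPh.rank_eq_card_non_zero_eigs, Fintype.card_subtype, this]
  -- A = P * (B * P), so rank A ≤ rank P
  have hAeq : A = P * ((∑ x ∈ X, Matrix.vecMulVec x x) * P) := by
    rw [hAdef, Finset.sum_mul, Finset.mul_sum]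
    refine Finset.sum_congr rfl fun x _ => ?_
    ext i j
    simp only [vecMulVec_apply, mul_apply, mulVec, dotProduct]
    rw [Finset.sum_mul_sum]
    refine Finset.sum_congr rfl fun k _ => ?_
    rw [Finset.mul_sum]
    refine Finset.sum_congr rfl fun l _ => ?_
    rw [hs j l]
    ring
  have hrankA : A.rank ≤ n := by
    rw [hAeq]
    exact le_trans (rank_mul_le_left _ _) (le_of_eq hrankP)
  -- charpoly of A
  set μ := hAh.eigenvalues with hμdef
  have hch : A.charpoly = ∏ i, (Polynomial.X - C (μ i)) := by
    conv_lhs => rw [hAh.spectral_theorem, Unitary.conjStarAlgAut_apply]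
    rw [my_charpoly_conj _ _ _
      ((Matrix.mem_unitaryGroup_iff).mp (hAh.eigenvectorUnitary).2)
      ((Matrix.mem_unitaryGroup_iff').mp (hAh.eigenvectorUnitary).2)]
    rw [charpoly_of_upperTriangular _ (blockTriangular_diagonal _)]
    refine Finset.prod_congr rfl fun i _ => ?_
    simp [hμdef]
  have hrank : A.rank = Fintype.card {i // μ i ≠ 0} := hAh.rank_eq_card_non_zero_eigs
  have hcount : m - n ≤ (Finset.univ.filter fun i => μ i = 0).card := by
    have h1 : (Finset.univ.filter fun i => ¬ μ i = 0).card ≤ n := by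
      rw [← Fintype.card_subtype]
      calc Fintype.card {i // ¬ μ i = 0} = A.rank := hrank.symm
        _ ≤ n := hrankA
    have h2 := Finset.card_filter_add_card_filter_not (s := Finset.univ)
      (p := fun i => μ i = 0)
    have h3 : (Finset.univ : Finset (Fin m)).card = m := by simp
    omega
  have hdvd : (Polynomial.X : ℝ[X]) ^ ((Finset.univ.filter fun i => μ i = 0).card) ∣ A.charpoly := by
    rw [hch, ← Finset.prod_filter_mul_prod_filter_not Finset.univ (fun i => μ i = 0)]
    apply Dvd.dvd.mul_right
    rw [Finset.prod_congr rfl (fun i hi => ?_), Finset.prod_const]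
    rw [(Finset.mem_filter.mp hi).2, map_zero, sub_zero]
  exact dvd_trans (pow_dvd_pow _ hcount) hdvd
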